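/- For every fair-goods instance with n agents, there exists a connected PROP1 allocation A with utilitarian welfare UW(A) >= 1/2. Consequently, since UW of any allocation is at most n under normalized valuations, the price of PROP1 with respect to utilitarian welfare for goods is at most 2n. -/

import Mathlib

open Finset

noncomputable section

/-- The value of a bundle `S` of items under additive (item-level) valuation `v`. -/
def bundleVal {m : ℕ} (v : Fin m → ℝ) (S : Finset (Fin m)) : ℝ := ∑ e ∈ S, v e

/-- A bundle is connected if it is an interval of the line `e_1, …, e_m`. -/
def IsConnBundle {m : ℕ} (S : Finset (Fin m)) : Prop :=
  ∀ a ∈ S, ∀ c ∈ S, ∀ b : Fin m, a ≤ b → b ≤ c → b ∈ S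

/-- A connected allocation: pairwise disjoint connected bundles covering all items. -/
def ConnAlloc (n m : ℕ) (A : Fin n → Finset (Fin m)) : Prop :=
  (∀ i, IsConnBundle (A i)) ∧
  (∀ i j : Fin n, i ≠ j → Disjoint (A i) (A j)) ∧
  (∀ e : Fin m, ∃ i, e ∈ A i)

/-- The maximin share of an agent with valuation `v`: the maximum over connected
`n`-partitions of the minimum bundle value. -/
def mmsVal (n m : ℕ) (v : Fin m → ℝ) : ℝ :=
  sSup { x : ℝ | ∃ A : Fin n → Finset (Fin m), ConnAlloc n m A ∧ x = ⨅ j, bundleVal v (A j) }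

/-- Utilitarian welfare of an allocation. -/
def utilW (n m : ℕ) (v : Fin n → Fin m → ℝ) (A : Fin n → Finset (Fin m)) : ℝ :=
  ∑ i, bundleVal (v i) (A i)

/-- Egalitarian welfare of an allocation. -/
def egalW (n m : ℕ) (v : Fin n → Fin m → ℝ) (A : Fin n → Finset (Fin m)) : ℝ :=
  ⨅ i, bundleVal (v i) (A i)

/-- Optimal utilitarian welfare over all connected allocations. -/
def optU (n m : ℕ) (v : Fin n → Fin m → ℝ) : ℝ :=
  sSup { x : ℝ | ∃ A, ConnAlloc n m A ∧ x = utilW n m v A }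

/-- Optimal egalitarian welfare over all connected allocations. -/
def optE (n m : ℕ) (v : Fin n → Fin m → ℝ) : ℝ :=
  sSup { x : ℝ | ∃ A, ConnAlloc n m A ∧ x = egalW n m v A }

/-- A connected allocation of goods is PROP1 if every agent either already has value at
least `1/n`, or gets value at least `1/n` after adding one item keeping connectivity. -/
def Prop1Goods (n m : ℕ) (v : Fin n → Fin m → ℝ) (A : Fin n → Finset (Fin m)) : Prop :=
  ∀ i, (1 / (n : ℝ)) ≤ bundleVal (v i) (A i) ∨
    ∃ e : Fin m, e ∉ A i ∧ IsConnBundle (insert e (A i)) ∧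
      (1 / (n : ℝ)) ≤ bundleVal (v i) (insert e (A i))

section Aux

variable {n m : ℕ}

def lineIv (m a b : ℕ) : Finset (Fin m) :=
  Finset.univ.filter (fun e => a ≤ (e : ℕ) ∧ (e : ℕ) < b)

lemma mem_lineIv {a b : ℕ} {e : Fin m} : e ∈ lineIv m a b ↔ a ≤ (e : ℕ) ∧ (e : ℕ) < b := by
  simp [lineIv]

lemma lineIv_conn (a b : ℕ) : IsConnBundle (lineIv m a b) := by
  intro x hx y hy z hxz hzy
  rw [mem_lineIv] at hx hy ⊢
  have h1 : (x : ℕ) ≤ (z : ℕ) := hxz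
  have h2 : (z : ℕ) ≤ (y : ℕ) := hzy
  omega

lemma conn_empty : IsConnBundle (∅ : Finset (Fin m)) := by
  intro a ha; simp at ha

lemma conn_insert_empty (e : Fin m) : IsConnBundle (insert e (∅ : Finset (Fin m))) := by
  intro a ha c hc b h1 h2
  simp only [Finset.insert_empty, mem_singleton] at ha hc ⊢
  subst ha; subst hc
  exact le_antisymm h2 h1

lemma lineIv_zero_m : lineIv m 0 m = (Finset.univ : Finset (Fin m)) := by
  ext e; simp [mem_lineIv, e.isLt]

lemma lineIv_subset {a b a' b' : ℕ} (h1 : a ≤ a') (h2 : b' ≤ b) :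
    lineIv m a' b' ⊆ lineIv m a b := by
  intro e he; rw [mem_lineIv] at he ⊢; omega

lemma lineIv_disj {a b c d : ℕ} (h : b ≤ c) : Disjoint (lineIv m a b) (lineIv m c d) := by
  rw [Finset.disjoint_left]
  intro e he he'
  rw [mem_lineIv] at he he'
  omega

lemma lineIv_union {a b c : ℕ} (hab : a ≤ b) (hbc : b ≤ c) :
    lineIv m a b ∪ lineIv m b c = lineIv m a c := by
  ext e; simp only [Finset.mem_union, mem_lineIv]; omega

lemma lineIv_single {a : ℕ} (ha : a < m) : lineIv m a (a + 1) = {(⟨a, ha⟩ : Fin m)} := by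
  ext e; simp only [mem_lineIv, mem_singleton, Fin.ext_iff]; omega

lemma lineIv_insert_left {a b : ℕ} (ha : a < m) (hab : a < b) :
    insert (⟨a, ha⟩ : Fin m) (lineIv m (a + 1) b) = lineIv m a b := by
  ext e; simp only [Finset.mem_insert, mem_lineIv, Fin.ext_iff]; omega

lemma lineIv_insert_right {a c : ℕ} (hc : c < m) (hac : a ≤ c) :
    insert (⟨c, hc⟩ : Fin m) (lineIv m a c) = lineIv m a (c + 1) := by
  ext e; simp only [Finset.mem_insert, mem_lineIv, Fin.ext_iff]; omega

variable {v : Fin m → ℝ}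

lemma bval_empty : bundleVal v (∅ : Finset (Fin m)) = 0 := by simp [bundleVal]

lemma bval_nonneg (hpos : ∀ e, 0 ≤ v e) (S : Finset (Fin m)) : 0 ≤ bundleVal v S :=
  Finset.sum_nonneg fun e _ => hpos e

lemma bval_mono (hpos : ∀ e, 0 ≤ v e) {S T : Finset (Fin m)} (h : S ⊆ T) :
    bundleVal v S ≤ bundleVal v T :=
  Finset.sum_le_sum_of_subset_of_nonneg h fun e _ _ => hpos e

lemma bval_union_le (hpos : ∀ e, 0 ≤ v e) (S T : Finset (Fin m)) :
    bundleVal v (S ∪ T) ≤ bundleVal v S + bundleVal v T := by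
  have h := Finset.sum_union_inter (s₁ := S) (s₂ := T) (f := v)
  have h2 : 0 ≤ bundleVal v (S ∩ T) := bval_nonneg hpos _
  unfold bundleVal at *
  linarith

lemma bval_split {a b c : ℕ} (hab : a ≤ b) (hbc : b ≤ c) :
    bundleVal v (lineIv m a c) = bundleVal v (lineIv m a b) + bundleVal v (lineIv m b c) := by
  rw [bundleVal, ← lineIv_union hab hbc, Finset.sum_union (lineIv_disj le_rfl)]
  rfl

lemma bval_single {a : ℕ} (ha : a < m) : bundleVal v (lineIv m a (a + 1)) = v ⟨a, ha⟩ := by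
  rw [lineIv_single ha]; simp [bundleVal]

lemma bval_insert {e : Fin m} {S : Finset (Fin m)} (he : e ∉ S) :
    bundleVal v (insert e S) = v e + bundleVal v S := by
  rw [bundleVal, Finset.sum_insert he]; rfl

end Aux

def P1 {n m : ℕ} (v : Fin n → Fin m → ℝ) (τ : ℝ) (j : Fin n) (S : Finset (Fin m)) : Prop :=
  τ ≤ bundleVal (v j) S ∨
    ∃ e ∉ S, IsConnBundle (insert e S) ∧ τ ≤ bundleVal (v j) (insert e S)

lemma knife (n m : ℕ) (hn : 1 ≤ n) (v : Fin n → Fin m → ℝ)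
    (hpos : ∀ i j, 0 ≤ v i j) (d : ℕ) :
    ∀ (s : ℕ) (R : Finset (Fin n)) (l : ℕ) (hl : l < m),
      R.card = s → 1 ≤ s →
      (∀ j ∈ R, ∀ e, v j e < 1 / (n : ℝ)) →
      (∀ j ∈ R, ((s : ℝ) + (d : ℝ)) * (1 / (n : ℝ)) ≤ bundleVal (v j) (lineIv m l m)) →
      ∃ (A B : Fin n → Finset (Fin m)) (j₁ : Fin n), j₁ ∈ R ∧
        (∀ j, A j ⊆ lineIv m l m) ∧ (∀ j, B j ⊆ lineIv m (l + 1) m) ∧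
        (∀ j, j ∉ R → A j = ∅) ∧ (∀ j, j ∉ R → B j = ∅) ∧
        (∀ j, IsConnBundle (A j)) ∧ (∀ j, IsConnBundle (B j)) ∧
        (∀ i j, i ≠ j → Disjoint (A i) (A j)) ∧ (∀ i j, i ≠ j → Disjoint (B i) (B j)) ∧
        (∀ e ∈ lineIv m l m, ∃ j, e ∈ A j) ∧ (∀ e ∈ lineIv m (l + 1) m, ∃ j, e ∈ B j) ∧
        (∀ j ∈ R, P1 v (1 / (n : ℝ)) j (A j)) ∧ (∀ j ∈ R, P1 v (1 / (n : ℝ)) j (B j)) ∧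
        ((⟨l, hl⟩ : Fin m) ∉ B j₁) ∧ IsConnBundle (insert (⟨l, hl⟩ : Fin m) (B j₁)) ∧
        (1 / (n : ℝ)) ≤ bundleVal (v j₁) (insert (⟨l, hl⟩ : Fin m) (B j₁)) ∧
        ((s : ℝ) + 2 * (d : ℝ)) * (1 / (n : ℝ)) ≤
          (∑ j ∈ R, bundleVal (v j) (A j)) + ∑ j ∈ R, bundleVal (v j) (B j) := by
  have hn0 : (0 : ℝ) < (n : ℝ) := by exact_mod_cast hn
  have hτ : (0 : ℝ) < 1 / (n : ℝ) := by positivity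
  have hd0 : (0 : ℝ) ≤ (d : ℝ) := Nat.cast_nonneg d
  intro s
  induction s with
  | zero => intro R l hl hcard hs; omega
  | succ s ih =>
    intro R l hl hcard _hs hard inv
    classical
    by_cases hs0 : s = 0
    · -- base case: one agent left
      subst hs0
      obtain ⟨w, hRw⟩ := Finset.card_eq_one.1 hcard
      subst hRw
      have hwR : w ∈ ({w} : Finset (Fin n)) := Finset.mem_singleton_self w
      have hardw := hard w hwR
      have invw := inv w hwR
      push_cast at invw
      have hτle : 1 / (n : ℝ) ≤ bundleVal (v w) (lineIv m l m) := by nlinarith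
      have hnotmem : (⟨l, hl⟩ : Fin m) ∉ lineIv m (l + 1) m := by
        rw [mem_lineIv]; simp only [Fin.val_mk]; omega
      have hins : insert (⟨l, hl⟩ : Fin m) (lineIv m (l + 1) m) = lineIv m l m :=
        lineIv_insert_left hl hl
      set Af : Fin n → Finset (Fin m) := fun j => if j = w then lineIv m l m else ∅ with hAfdef
      set Bf : Fin n → Finset (Fin m) :=
        fun j => if j = w then lineIv m (l + 1) m else ∅ with hBfdef
      have hAfw : Af w = lineIv m l m := by simp [hAfdef]
      have hBfw : Bf w = lineIv m (l + 1) m := by simp [hBfdef]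
      have hAfj : ∀ j, j ≠ w → Af j = ∅ := fun j h => by simp [hAfdef, h]
      have hBfj : ∀ j, j ≠ w → Bf j = ∅ := fun j h => by simp [hBfdef, h]
      refine ⟨Af, Bf, w, hwR, ?_, ?_, ?_, ?_, ?_, ?_, ?_, ?_, ?_, ?_, ?_, ?_, ?_, ?_, ?_, ?_⟩
      · intro j
        by_cases h : j = w
        · subst h; rw [hAfw]
        · rw [hAfj j h]; exact Finset.empty_subset _
      · intro j
        by_cases h : j = w
        · subst h; rw [hBfw]
        · rw [hBfj j h]; exact Finset.empty_subset _
      · intro j hj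
        exact hAfj j (by simpa using hj)
      · intro j hj
        exact hBfj j (by simpa using hj)
      · intro j
        by_cases h : j = w
        · subst h; rw [hAfw]; exact lineIv_conn _ _
        · rw [hAfj j h]; exact conn_empty
      · intro j
        by_cases h : j = w
        · subst h; rw [hBfw]; exact lineIv_conn _ _
        · rw [hBfj j h]; exact conn_empty
      · intro i j hij
        by_cases hi : i = w
        · have hj : j ≠ w := fun h => hij (by rw [hi, h])
          rw [hAfj j hj]; exact Finset.disjoint_empty_right _
        · rw [hAfj i hi]; exact Finset.disjoint_empty_left _
      · intro i j hij
        by_cases hi : i = w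
        · have hj : j ≠ w := fun h => hij (by rw [hi, h])
          rw [hBfj j hj]; exact Finset.disjoint_empty_right _
        · rw [hBfj i hi]; exact Finset.disjoint_empty_left _
      · intro e he; exact ⟨w, by rwa [hAfw]⟩
      · intro e he; exact ⟨w, by rwa [hBfw]⟩
      · intro j hj
        rw [Finset.mem_singleton] at hj; subst hj
        left; rw [hAfw]; exact hτle
      · intro j hj
        rw [Finset.mem_singleton] at hj; subst hj
        right
        rw [hBfw]
        exact ⟨⟨l, hl⟩, hnotmem, by rw [hins]; exact lineIv_conn _ _, by rw [hins]; exact hτle⟩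
      · rw [hBfw]; exact hnotmem
      · rw [hBfw, hins]; exact lineIv_conn _ _
      · rw [hBfw, hins]; exact hτle
      · rw [Finset.sum_singleton, Finset.sum_singleton, hAfw, hBfw]
        have h1 : v w ⟨l, hl⟩ < 1 / (n : ℝ) := hardw _
        have hXsplit : bundleVal (v w) (lineIv m l m)
            = v w ⟨l, hl⟩ + bundleVal (v w) (lineIv m (l + 1) m) := by
          rw [← hins, bval_insert hnotmem]
        push_cast
        nlinarith
    · -- inductive step
      have hs1 : 1 ≤ s := Nat.one_le_iff_ne_zero.2 hs0
      have hm0 : 0 < m := lt_of_le_of_lt (Nat.zero_le l) hl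
      have hRne : R.Nonempty := Finset.card_pos.1 (by omega)
      have hQm : ∃ j ∈ R, 1 / (n : ℝ) ≤ bundleVal (v j) (lineIv m l ((m - 1) + 1)) := by
        obtain ⟨j0, hj0⟩ := hRne
        refine ⟨j0, hj0, ?_⟩
        have h1 : (m - 1) + 1 = m := by omega
        rw [h1]
        have h2 := inv j0 hj0
        have hs0' : (0 : ℝ) ≤ (s : ℝ) := Nat.cast_nonneg s
        push_cast at h2
        nlinarith
      have hQex : ∃ k, ∃ j ∈ R, 1 / (n : ℝ) ≤ bundleVal (v j) (lineIv m l (k + 1)) :=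
        ⟨m - 1, hQm⟩
      set c := Nat.find hQex with hcdef
      obtain ⟨w, hwR, hw⟩ : ∃ j ∈ R, 1 / (n : ℝ) ≤ bundleVal (v j) (lineIv m l (c + 1)) :=
        Nat.find_spec hQex
      have hc_le : c ≤ m - 1 := Nat.find_min' hQex hQm
      have hcm : c < m := by omega
      have hlc : l + 1 ≤ c := by
        by_contra h
        push_neg at h
        have hsub : lineIv m l (c + 1) ⊆ lineIv m l (l + 1) :=
          lineIv_subset le_rfl (by omega)
        have hmono := bval_mono (v := v w) (fun e => hpos w e) hsub
        rw [bval_single hl] at hmono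
        have hvw := hard w hwR ⟨l, hl⟩
        linarith
      have hunder : ∀ j ∈ R, bundleVal (v j) (lineIv m l c) < 1 / (n : ℝ) := by
        intro j hj
        have hmin := Nat.find_min hQex (show c - 1 < c by omega)
        push_neg at hmin
        have h2 := hmin j hj
        rwa [show (c - 1) + 1 = c by omega] at h2
      have hwR' : w ∉ R.erase w := Finset.notMem_erase w R
      have hcard' : (R.erase w).card = s := by
        rw [Finset.card_erase_of_mem hwR, hcard]
        omega
      have hard' : ∀ j ∈ R.erase w, ∀ e, v j e < 1 / (n : ℝ) :=
        fun j hj => hard j (Finset.mem_of_mem_erase hj)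
      have inv' : ∀ j ∈ R.erase w,
          ((s : ℝ) + (d : ℝ)) * (1 / (n : ℝ)) ≤ bundleVal (v j) (lineIv m c m) := by
        intro j hj
        have hjR := Finset.mem_of_mem_erase hj
        have h2 := inv j hjR
        have h3 := hunder j hjR
        have h4 : bundleVal (v j) (lineIv m l m)
            = bundleVal (v j) (lineIv m l c) + bundleVal (v j) (lineIv m c m) :=
          bval_split (by omega) (by omega)
        rw [h4] at h2
        have h5 : (((s : ℕ) + 1 : ℕ) : ℝ) = (s : ℝ) + 1 := by push_cast; ring
        rw [h5] at h2
        have h6 : ((s : ℝ) + 1 + (d : ℝ)) * (1 / (n : ℝ))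
            = ((s : ℝ) + (d : ℝ)) * (1 / (n : ℝ)) + 1 / (n : ℝ) := by ring
        linarith
      obtain ⟨A', B', j₁', hj₁', hC1, hC2, hC3, hC4, hC5, hC6, hC7, hC8, hC9, hC10,
        hC11, hC12, hC13, hC14, hC15, hC16⟩ := ih (R.erase w) c hcm hcard' hs1 hard' inv'
      have hA'w : A' w = ∅ := hC3 w hwR'
      have hB'w : B' w = ∅ := hC4 w hwR'
      set Af : Fin n → Finset (Fin m) :=
        fun j => if j = w then lineIv m l c else A' j with hAfdef
      set Bf : Fin n → Finset (Fin m) :=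
        fun j => if j = w then lineIv m (l + 1) (c + 1) else B' j with hBfdef
      have hAfw : Af w = lineIv m l c := by simp [hAfdef]
      have hBfw : Bf w = lineIv m (l + 1) (c + 1) := by simp [hBfdef]
      have hAfj : ∀ j, j ≠ w → Af j = A' j := fun j h => by simp [hAfdef, h]
      have hBfj : ∀ j, j ≠ w → Bf j = B' j := fun j h => by simp [hBfdef, h]
      have hinsR : insert (⟨c, hcm⟩ : Fin m) (lineIv m l c) = lineIv m l (c + 1) :=
        lineIv_insert_right hcm (by omega)
      have hinsL : insert (⟨l, hl⟩ : Fin m) (lineIv m (l + 1) (c + 1)) = lineIv m l (c + 1) :=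
        lineIv_insert_left hl (by omega)
      refine ⟨Af, Bf, w, hwR, ?_, ?_, ?_, ?_, ?_, ?_, ?_, ?_, ?_, ?_, ?_, ?_, ?_, ?_, ?_, ?_⟩
      · intro j
        by_cases h : j = w
        · subst h; rw [hAfw]; exact lineIv_subset le_rfl (by omega)
        · rw [hAfj j h]
          exact (hC1 j).trans (lineIv_subset (by omega) le_rfl)
      · intro j
        by_cases h : j = w
        · subst h; rw [hBfw]; exact lineIv_subset le_rfl (by omega)
        · rw [hBfj j h]
          exact (hC2 j).trans (lineIv_subset (by omega) le_rfl)
      · intro j hj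
        have h : j ≠ w := fun h => hj (h ▸ hwR)
        rw [hAfj j h]
        exact hC3 j fun hmem => hj (Finset.mem_of_mem_erase hmem)
      · intro j hj
        have h : j ≠ w := fun h => hj (h ▸ hwR)
        rw [hBfj j h]
        exact hC4 j fun hmem => hj (Finset.mem_of_mem_erase hmem)
      · intro j
        by_cases h : j = w
        · subst h; rw [hAfw]; exact lineIv_conn _ _
        · rw [hAfj j h]; exact hC5 j
      · intro j
        by_cases h : j = w
        · subst h; rw [hBfw]; exact lineIv_conn _ _
        · rw [hBfj j h]; exact hC6 j
      · intro i j hij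
        by_cases hi : i = w
        · have hj : j ≠ w := fun h => hij (by rw [hi, h])
          rw [hi, hAfw, hAfj j hj]
          exact Finset.disjoint_of_subset_right (hC1 j) (lineIv_disj le_rfl)
        · by_cases hj : j = w
          · rw [hj, hAfw, hAfj i hi]
            exact (Finset.disjoint_of_subset_right (hC1 i) (lineIv_disj le_rfl)).symm
          · rw [hAfj i hi, hAfj j hj]; exact hC7 i j hij
      · intro i j hij
        by_cases hi : i = w
        · have hj : j ≠ w := fun h => hij (by rw [hi, h])
          rw [hi, hBfw, hBfj j hj]
          exact Finset.disjoint_of_subset_right (hC2 j) (lineIv_disj le_rfl)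
        · by_cases hj : j = w
          · rw [hj, hBfw, hBfj i hi]
            exact (Finset.disjoint_of_subset_right (hC2 i) (lineIv_disj le_rfl)).symm
          · rw [hBfj i hi, hBfj j hj]; exact hC8 i j hij
      · intro e he
        rw [mem_lineIv] at he
        by_cases hec : (e : ℕ) < c
        · exact ⟨w, by rw [hAfw, mem_lineIv]; omega⟩
        · have he' : e ∈ lineIv m c m := by rw [mem_lineIv]; omega
          obtain ⟨j, hj⟩ := hC9 e he'
          have hjw : j ≠ w := by
            intro h; subst h; rw [hA'w] at hj; simp at hj
          exact ⟨j, by rwa [hAfj j hjw]⟩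
      · intro e he
        rw [mem_lineIv] at he
        by_cases hec : (e : ℕ) < c + 1
        · exact ⟨w, by rw [hBfw, mem_lineIv]; omega⟩
        · have he' : e ∈ lineIv m (c + 1) m := by rw [mem_lineIv]; omega
          obtain ⟨j, hj⟩ := hC10 e he'
          have hjw : j ≠ w := by
            intro h; subst h; rw [hB'w] at hj; simp at hj
          exact ⟨j, by rwa [hBfj j hjw]⟩
      · intro j hj
        by_cases h : j = w
        · subst h
          right
          rw [hAfw]
          refine ⟨⟨c, hcm⟩, by rw [mem_lineIv]; simp only [Fin.val_mk]; omega, ?_, ?_⟩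
          · rw [hinsR]; exact lineIv_conn _ _
          · rw [hinsR]; exact hw
        · rw [hAfj j h]
          exact hC11 j (Finset.mem_erase.2 ⟨h, hj⟩)
      · intro j hj
        by_cases h : j = w
        · subst h
          right
          rw [hBfw]
          refine ⟨⟨l, hl⟩, by rw [mem_lineIv]; simp only [Fin.val_mk]; omega, ?_, ?_⟩
          · rw [hinsL]; exact lineIv_conn _ _
          · rw [hinsL]; exact hw
        · rw [hBfj j h]
          exact hC12 j (Finset.mem_erase.2 ⟨h, hj⟩)
      · rw [hBfw, mem_lineIv]; simp only [Fin.val_mk]; omega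
      · rw [hBfw, hinsL]; exact lineIv_conn _ _
      · rw [hBfw, hinsL]; exact hw
      · -- welfare
        have hsumA : ∑ j ∈ R, bundleVal (v j) (Af j)
            = bundleVal (v w) (lineIv m l c) + ∑ j ∈ R.erase w, bundleVal (v j) (A' j) := by
          rw [← Finset.add_sum_erase R _ hwR, hAfw]
          congr 1
          exact Finset.sum_congr rfl fun j hj => by
            rw [hAfj j (Finset.ne_of_mem_erase hj)]
        have hsumB : ∑ j ∈ R, bundleVal (v j) (Bf j)
            = bundleVal (v w) (lineIv m (l + 1) (c + 1))
              + ∑ j ∈ R.erase w, bundleVal (v j) (B' j) := by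
          rw [← Finset.add_sum_erase R _ hwR, hBfw]
          congr 1
          exact Finset.sum_congr rfl fun j hj => by
            rw [hBfj j (Finset.ne_of_mem_erase hj)]
        have hu : lineIv m l c ∪ lineIv m (l + 1) (c + 1) = lineIv m l (c + 1) := by
          ext e; simp only [Finset.mem_union, mem_lineIv]; omega
        have hsub := bval_union_le (v := v w) (fun e => hpos w e)
          (lineIv m l c) (lineIv m (l + 1) (c + 1))
        rw [hu] at hsub
        rw [hsumA, hsumB]
        have h5 : (((s : ℕ) + 1 : ℕ) : ℝ) = (s : ℝ) + 1 := by push_cast; ring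
        rw [h5]
        have h6 : ((s : ℝ) + 1 + 2 * (d : ℝ)) * (1 / (n : ℝ))
            = ((s : ℝ) + 2 * (d : ℝ)) * (1 / (n : ℝ)) + 1 / (n : ℝ) := by ring
        linarith


/-- For every fair-goods instance, there exists a connected PROP1
allocation with utilitarian welfare at least `1/2`. -/
theorem goods_utilitarian_prop1_exists (n m : ℕ) (hn : 1 ≤ n)
    (v : Fin n → Fin m → ℝ)
    (hpos : ∀ i j, 0 ≤ v i j)
    (hnorm : ∀ i, bundleVal (v i) Finset.univ = 1) :
    ∃ A : Fin n → Finset (Fin m), ConnAlloc n m A ∧ Prop1Goods n m v A ∧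
      (1 / 2 : ℝ) ≤ utilW n m v A := by
  classical
  have hn0 : (0 : ℝ) < (n : ℝ) := by exact_mod_cast hn
  have hτ1 : 1 / (n : ℝ) ≤ 1 := by
    rw [div_le_one hn0]; exact_mod_cast hn
  rcases Nat.eq_zero_or_pos m with hm | hm
  · exfalso
    have h := hnorm ⟨0, hn⟩
    subst hm
    simp [bundleVal] at h
  set H := Finset.univ.filter (fun i : Fin n => ∀ e, v i e < 1 / (n : ℝ)) with hH
  have hEasy : ∀ i, i ∉ H → ∃ e, 1 / (n : ℝ) ≤ v i e := by
    intro i hi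
    rw [hH, Finset.mem_filter] at hi
    push_neg at hi
    exact hi (Finset.mem_univ i)
  by_cases hHe : H = ∅
  · -- every agent has a valuable single item; give everything to agent 0
    set i0 : Fin n := ⟨0, hn⟩
    set Af : Fin n → Finset (Fin m) :=
      fun i => if i = i0 then Finset.univ else ∅ with hAfdef
    have hAf0 : Af i0 = Finset.univ := by simp [hAfdef]
    have hAfj : ∀ i, i ≠ i0 → Af i = ∅ := fun i h => by simp [hAfdef, h]
    refine ⟨Af, ⟨?_, ?_, ?_⟩, ?_, ?_⟩
    · intro i
      by_cases h : i = i0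
      · rw [h, hAf0, ← lineIv_zero_m]; exact lineIv_conn _ _
      · rw [hAfj i h]; exact conn_empty
    · intro i j hij
      by_cases hi : i = i0
      · have hj : j ≠ i0 := fun h => hij (by rw [hi, h])
        rw [hAfj j hj]; exact Finset.disjoint_empty_right _
      · rw [hAfj i hi]; exact Finset.disjoint_empty_left _
    · intro e
      exact ⟨i0, by rw [hAf0]; exact Finset.mem_univ e⟩
    · intro i
      by_cases h : i = i0
      · left
        rw [h, hAf0, hnorm i0]
        exact hτ1
      · right
        obtain ⟨e, he⟩ := hEasy i (by rw [hHe]; exact Finset.notMem_empty i)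
        rw [hAfj i h]
        refine ⟨e, Finset.notMem_empty e, conn_insert_empty e, ?_⟩
        rw [bval_insert (Finset.notMem_empty e), bval_empty]
        linarith
    · have hsum : utilW n m v Af = bundleVal (v i0) (Af i0) := by
        rw [utilW]
        refine Finset.sum_eq_single_of_mem i0 (Finset.mem_univ i0) fun j _ hj => ?_
        rw [hAfj j hj, bval_empty]
      rw [hsum, hAf0, hnorm i0]
      norm_num
  · -- there exist "hard" agents; run the double moving knife over them
    have hHne : H.Nonempty := Finset.nonempty_iff_ne_empty.2 hHe
    have hone : 1 ≤ H.card := Finset.card_pos.2 hHne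
    have hcardn : H.card ≤ n := by
      have h := Finset.card_le_univ H
      rwa [Fintype.card_fin] at h
    have hard : ∀ j ∈ H, ∀ e, v j e < 1 / (n : ℝ) := fun j hj => (Finset.mem_filter.1 hj).2
    have inv : ∀ j ∈ H,
        ((H.card : ℝ) + ((n - H.card : ℕ) : ℝ)) * (1 / (n : ℝ))
          ≤ bundleVal (v j) (lineIv m 0 m) := by
      intro j hj
      rw [lineIv_zero_m, hnorm j, Nat.cast_sub hcardn]
      rw [show ((H.card : ℝ) + ((n : ℝ) - (H.card : ℝ))) * (1 / (n : ℝ))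
            = (n : ℝ) * (1 / (n : ℝ)) by ring]
      rw [mul_one_div, div_self hn0.ne']
    obtain ⟨A, B, j₁, hj₁, C1, C2, C3, C4, C5, C6, C7, C8, C9, C10,
      C11, C12, C13, C14, C15, C16⟩ :=
      knife n m hn v hpos (n - H.card) H.card H 0 hm rfl hone hard inv
    have he0B : ∀ k, (⟨0, hm⟩ : Fin m) ∉ B k := by
      intro k hk
      have h := C2 k hk
      rw [mem_lineIv] at h
      simp only [Fin.val_mk] at h
      omega
    set Bf : Fin n → Finset (Fin m) :=
      fun j => if j = j₁ then insert (⟨0, hm⟩ : Fin m) (B j₁) else B j with hBfdef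
    have hBfj₁ : Bf j₁ = insert (⟨0, hm⟩ : Fin m) (B j₁) := by simp [hBfdef]
    have hBfj : ∀ j, j ≠ j₁ → Bf j = B j := fun j h => by simp [hBfdef, h]
    have hWA : utilW n m v A = ∑ j ∈ H, bundleVal (v j) (A j) := by
      rw [utilW]
      exact (Finset.sum_subset (Finset.subset_univ H)
        (fun x _ hx => by rw [C3 x hx, bval_empty])).symm
    have hWB : utilW n m v Bf = ∑ j ∈ H, bundleVal (v j) (Bf j) := by
      rw [utilW]
      refine (Finset.sum_subset (Finset.subset_univ H) (fun x _ hx => ?_)).symm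
      have hxj : x ≠ j₁ := fun h => hx (h ▸ hj₁)
      rw [hBfj x hxj, C4 x hx, bval_empty]
    have hBmono : ∀ j ∈ H, bundleVal (v j) (B j) ≤ bundleVal (v j) (Bf j) := by
      intro j hj
      by_cases h : j = j₁
      · rw [h, hBfj₁]
        exact bval_mono (fun e => hpos j₁ e) (Finset.subset_insert _ _)
      · rw [hBfj j h]
    have hsum : (1 : ℝ) ≤ utilW n m v A + utilW n m v Bf := by
      have h3 : ∑ j ∈ H, bundleVal (v j) (B j) ≤ ∑ j ∈ H, bundleVal (v j) (Bf j) :=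
        Finset.sum_le_sum hBmono
      have h4 : (1 : ℝ) ≤ ((H.card : ℝ) + 2 * ((n - H.card : ℕ) : ℝ)) * (1 / (n : ℝ)) := by
        rw [Nat.cast_sub hcardn]
        rw [show ((H.card : ℝ) + 2 * ((n : ℝ) - (H.card : ℝ))) * (1 / (n : ℝ))
              = (2 * (n : ℝ) - (H.card : ℝ)) / (n : ℝ) by ring]
        rw [le_div_iff₀ hn0]
        have h5 : (H.card : ℝ) ≤ (n : ℝ) := by exact_mod_cast hcardn
        linarith
      rw [hWA, hWB]
      linarith
    have hConnA : ConnAlloc n m A := by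
      refine ⟨C5, C7, fun e => C9 e ?_⟩
      rw [mem_lineIv]
      exact ⟨Nat.zero_le _, e.isLt⟩
    have hP1A : Prop1Goods n m v A := by
      intro i
      by_cases hi : i ∈ H
      · exact C11 i hi
      · right
        obtain ⟨e, he⟩ := hEasy i hi
        rw [C3 i hi]
        refine ⟨e, Finset.notMem_empty e, conn_insert_empty e, ?_⟩
        rw [bval_insert (Finset.notMem_empty e), bval_empty]
        linarith
    have hConnB : ConnAlloc n m Bf := by
      refine ⟨?_, ?_, ?_⟩
      · intro i
        by_cases h : i = j₁
        · rw [h, hBfj₁]; exact C14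
        · rw [hBfj i h]; exact C6 i
      · intro i j hij
        by_cases hi : i = j₁
        · have hj : j ≠ j₁ := fun h => hij (by rw [hi, h])
          rw [hi, hBfj₁, hBfj j hj]
          rw [Finset.disjoint_insert_left]
          exact ⟨he0B j, C8 j₁ j fun h => hj h.symm⟩
        · by_cases hj : j = j₁
          · rw [hj, hBfj₁, hBfj i hi]
            rw [Finset.disjoint_insert_right]
            exact ⟨he0B i, C8 i j₁ hi⟩
          · rw [hBfj i hi, hBfj j hj]
            exact C8 i j hij
      · intro e
        by_cases he : e = (⟨0, hm⟩ : Fin m)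
        · exact ⟨j₁, by rw [hBfj₁, he]; exact Finset.mem_insert_self _ _⟩
        · have he1 : e ∈ lineIv m (0 + 1) m := by
            rw [mem_lineIv]
            have : (e : ℕ) ≠ 0 := fun h0 => he (Fin.ext (by simp [h0, Fin.val_mk]))
            omega
          obtain ⟨j, hj⟩ := C10 e he1
          by_cases hjj : j = j₁
          · exact ⟨j₁, by rw [hBfj₁]; exact Finset.mem_insert_of_mem (hjj ▸ hj)⟩
          · exact ⟨j, by rwa [hBfj j hjj]⟩
    have hP1B : Prop1Goods n m v Bf := by
      intro i
      by_cases h : i = j₁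
      · left
        rw [h, hBfj₁]
        exact C15
      · by_cases hi : i ∈ H
        · have h2 := C12 i hi
          rw [← hBfj i h] at h2
          exact h2
        · right
          obtain ⟨e, he⟩ := hEasy i hi
          rw [hBfj i h, C4 i hi]
          refine ⟨e, Finset.notMem_empty e, conn_insert_empty e, ?_⟩
          rw [bval_insert (Finset.notMem_empty e), bval_empty]
          linarith
    rcases le_or_gt (1 / 2 : ℝ) (utilW n m v A) with hc | hc
    · exact ⟨A, hConnA, hP1A, hc⟩
    · exact ⟨Bf, hConnB, hP1B, by linarith⟩
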